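/- Let ε > 0 be a constant, let q be a positive integer and let G ~ G(n,p) where p = (q+1+ε)·log n / n. Then asymptotically almost surely Σ_{v ∈ V(G)} (q/(q+1))^{d_G(v)} ≤ n^{−ε/(4(q+1))}. -/

import Mathlib

open MeasureTheory Filter

noncomputable def bernoulliMeasure (p : ℝ) : Measure Bool :=
  (PMF.bernoulli (min (Real.toNNReal p) 1) (min_le_right _ _)).toMeasure

noncomputable def gnp (n : ℕ) (p : ℝ) : Measure (Sym2 (Fin n) → Bool) :=
  Measure.pi fun _ => bernoulliMeasure p

def graphOf {n : ℕ} (ω : Sym2 (Fin n) → Bool) : SimpleGraph (Fin n) where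
  Adj u v := u ≠ v ∧ ω s(u, v) = true
  symm := by
    refine ⟨?_⟩
    intro u v h
    exact ⟨h.1.symm, by rw [Sym2.eq_swap]; exact h.2⟩
  loopless := by
    refine ⟨?_⟩
    intro u h
    exact h.1 rfl

instance {n : ℕ} (ω : Sym2 (Fin n) → Bool) : DecidableRel (graphOf ω).Adj :=
  fun u v => inferInstanceAs (Decidable (u ≠ v ∧ ω s(u, v) = true))

/-- `e_G(A)`: the number of edges with both endpoints in `A`. -/
def edgesWithin {n : ℕ} (ω : Sym2 (Fin n) → Bool) (A : Finset (Fin n)) : ℕ :=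
  ((graphOf ω).edgeFinset ∩ A.sym2).card

/-- `e_G(X,Y)`: the number of edges with one endpoint in `X` and one in `Y`. -/
def edgesBetween {n : ℕ} (ω : Sym2 (Fin n) → Bool) (X Y : Finset (Fin n)) : ℕ :=
  ((graphOf ω).edgeFinset.filter fun e => ∃ x ∈ X, ∃ y ∈ Y, e = s(x, y)).card

/-- `X_i`: the number of vertices of degree exactly `i`. -/
def degCount {n : ℕ} (ω : Sym2 (Fin n) → Bool) (i : ℕ) : ℕ :=
  (Finset.univ.filter fun v => (graphOf ω).degree v = i).card

/-- `μ_i = E[X_i]`. -/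
noncomputable def muDeg (n : ℕ) (p : ℝ) (i : ℕ) : ℝ :=
  ∫ ω, (degCount ω i : ℝ) ∂(gnp n p)

/-- Outer neighbourhood of a vertex set. -/
def outerNbhd {V : Type*} (G : SimpleGraph V) (U : Set V) : Set V :=
  {v | v ∉ U ∧ ∃ u ∈ U, G.Adj u v}

/-- `G` is a `(t,k)`-expander. -/
def IsExpander {V : Type*} (G : SimpleGraph V) (t k : ℝ) : Prop :=
  ∀ U : Set V, (U.ncard : ℝ) ≤ t → k * U.ncard ≤ ((outerNbhd G U).ncard : ℝ)

/-- Length of a longest path in `G`. -/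
noncomputable def longestPathLength {V : Type*} (G : SimpleGraph V) : ℕ :=
  sSup {l : ℕ | ∃ (u v : V) (p : G.Walk u v), p.IsPath ∧ p.length = l}

/-- `e` is a booster for `G`. -/
def IsBooster {V : Type*} [Fintype V] [DecidableEq V] (G : SimpleGraph V) (e : Sym2 V) : Prop :=
  ¬ e.IsDiag ∧ e ∉ G.edgeSet ∧
    ((G ⊔ SimpleGraph.fromEdgeSet {e}).IsHamiltonian ∨
      longestPathLength G < longestPathLength (G ⊔ SimpleGraph.fromEdgeSet {e}))

/-- The set of boosters of `G`. -/
def boosters {V : Type*} [Fintype V] [DecidableEq V] (G : SimpleGraph V) : Set (Sym2 V) :=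
  {e | IsBooster G e}

/-! ### Auxiliary lemmas for Statement 9 -/

instance bernoulliMeasure.instIsProbabilityMeasure (r : ℝ) :
    IsProbabilityMeasure (bernoulliMeasure r) :=
  PMF.toMeasure.isProbabilityMeasure _

instance gnp.instIsProbabilityMeasure (n : ℕ) (r : ℝ) : IsProbabilityMeasure (gnp n r) := by
  unfold gnp; infer_instance

lemma bernoulli_integral (r : ℝ) (h0 : 0 ≤ r) (h1 : r ≤ 1) (f : Bool → ℝ) :
    ∫ b, f b ∂bernoulliMeasure r = r * f true + (1 - r) * f false := by
  have hmin : min (Real.toNNReal r) 1 = Real.toNNReal r :=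
    min_eq_left (by simp [h1])
  have htrue : bernoulliMeasure r {true} = ENNReal.ofReal r := by
    rw [bernoulliMeasure, PMF.toMeasure_apply_singleton _ _ (measurableSet_singleton _),
      PMF.bernoulli_apply, hmin]
    rfl
  have hfalse : bernoulliMeasure r {false} = 1 - ENNReal.ofReal r := by
    rw [bernoulliMeasure, PMF.toMeasure_apply_singleton _ _ (measurableSet_singleton _),
      PMF.bernoulli_apply, hmin]
    rfl
  rw [integral_fintype]
  rw [Fintype.sum_bool, Measure.real_def, Measure.real_def, htrue, hfalse]
  rw [ENNReal.toReal_sub_of_le (ENNReal.ofReal_le_one.2 h1) ENNReal.one_ne_top]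
  simp [ENNReal.toReal_ofReal h0]
  exact Integrable.of_finite

/-- The incidence edges of a vertex. -/
def incEdges {n : ℕ} (v : Fin n) : Finset (Sym2 (Fin n)) :=
  (Finset.univ.erase v).image (fun u => s(v, u))

lemma card_incEdges {n : ℕ} (v : Fin n) : (incEdges v).card = n - 1 := by
  rw [incEdges, Finset.card_image_of_injective _ (fun a b hab => Sym2.congr_right.1 hab),
    Finset.card_erase_of_mem (Finset.mem_univ v), Finset.card_univ, Fintype.card_fin]

lemma pow_degree_eq_prod {n : ℕ} (v : Fin n) (x : ℝ) (ω : Sym2 (Fin n) → Bool) :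
    x ^ ((graphOf ω).degree v) =
      ∏ e : Sym2 (Fin n), (if e ∈ incEdges v then (if ω e then x else 1) else 1) := by
  rw [Finset.prod_ite_mem, Finset.univ_inter, incEdges,
    Finset.prod_image (fun a _ b _ hab => Sym2.congr_right.1 hab)]
  have hdeg : (graphOf ω).degree v
      = ((Finset.univ.erase v).filter (fun u => ω s(v, u) = true)).card := by
    rw [← SimpleGraph.card_neighborFinset_eq_degree]
    congr 1
    ext u
    simp only [SimpleGraph.mem_neighborFinset, Finset.mem_filter, Finset.mem_erase,
      Finset.mem_univ, and_true, true_and]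
    show (v ≠ u ∧ ω s(v, u) = true) ↔ _
    constructor
    · rintro ⟨h1, h2⟩; exact ⟨h1.symm, h2⟩
    · rintro ⟨h1, h2⟩; exact ⟨h1.symm, h2⟩
  rw [hdeg, Finset.prod_ite, Finset.prod_const, Finset.prod_const, one_pow, mul_one]

lemma integral_pow_degree {n : ℕ} (r : ℝ) (h0 : 0 ≤ r) (h1 : r ≤ 1) (x : ℝ) (v : Fin n) :
    ∫ ω, x ^ ((graphOf ω).degree v) ∂gnp n r = (1 - r * (1 - x)) ^ (n - 1) := by
  letI : MeasureSpace Bool := ⟨bernoulliMeasure r⟩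
  haveI : SigmaFinite (volume : Measure Bool) :=
    (inferInstance : SigmaFinite (bernoulliMeasure r))
  haveI : IsProbabilityMeasure (volume : Measure Bool) :=
    (inferInstance : IsProbabilityMeasure (bernoulliMeasure r))
  have hvol : gnp n r = (volume : Measure (Sym2 (Fin n) → Bool)) := rfl
  simp_rw [pow_degree_eq_prod v x, hvol]
  rw [MeasureTheory.integral_fintype_prod_volume_eq_prod (ι := Sym2 (Fin n))
    (fun e (b : Bool) => if e ∈ incEdges v then (if b then x else 1) else 1)]
  have hfac : ∀ e : Sym2 (Fin n),
      (∫ b : Bool, (if e ∈ incEdges v then (if b then x else 1) else 1))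
        = if e ∈ incEdges v then (1 - r * (1 - x)) else 1 := by
    intro e
    by_cases he : e ∈ incEdges v <;> simp only [he, if_true, if_false]
    · rw [show (volume : Measure Bool) = bernoulliMeasure r from rfl,
        bernoulli_integral r h0 h1]
      simp; ring
    · rw [integral_const]
      have huniv : ({false, true} : Set Bool) = Set.univ := by ext b; cases b <;> simp
      rw [show (volume : Measure Bool).real Set.univ = 1 from by rw [Measure.real_def, measure_univ, ENNReal.toReal_one]]
      simp
  rw [Finset.prod_congr rfl (fun e _ => hfac e), Finset.prod_ite_mem, Finset.univ_inter,
    Finset.prod_const, card_incEdges]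

lemma integral_sum_pow_degree (n : ℕ) (r : ℝ) (h0 : 0 ≤ r) (h1 : r ≤ 1) (x : ℝ) :
    ∫ ω, (∑ v : Fin n, x ^ ((graphOf ω).degree v)) ∂gnp n r
      = n * (1 - r * (1 - x)) ^ (n - 1) := by
  rw [integral_finset_sum _ (fun v _ => Integrable.of_finite)]
  simp_rw [integral_pow_degree r h0 h1 x]
  rw [Finset.sum_const, Finset.card_univ, Fintype.card_fin, nsmul_eq_mul]

/-- Lemma 4.10: for `p = (q+1+ε) log n / n`, a.a.s.
`Σ_v (q/(q+1))^{d_G(v)} ≤ n^{-ε/(4(q+1))}`. -/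
theorem stmt_9 (ε : ℝ) (hε : 0 < ε) (q : ℕ) (hq : 1 ≤ q)
    (p : ℕ → ℝ) (hp : ∀ n : ℕ, p n = ((q : ℝ) + 1 + ε) * Real.log n / n) :
    Tendsto
      (fun n : ℕ => gnp n (p n)
        {ω | ∑ v : Fin n, ((q : ℝ) / ((q : ℝ) + 1)) ^ ((graphOf ω).degree v)
            ≤ (n : ℝ) ^ (-(ε / (4 * ((q : ℝ) + 1))))})
      atTop (nhds 1) := by
  have hq1 : (0:ℝ) < (q : ℝ) + 1 := by positivity
  set c : ℝ := ε / ((q : ℝ) + 1) with hc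
  have hcpos : 0 < c := div_pos hε hq1
  set x : ℝ := (q : ℝ) / ((q : ℝ) + 1) with hxdef
  have hx0 : 0 ≤ x := by positivity
  have hx1 : x ≤ 1 := by
    rw [hxdef, div_le_one hq1]; linarith
  set A : (n : ℕ) → Set (Sym2 (Fin n) → Bool) := fun n =>
    {ω | ∑ v : Fin n, x ^ ((graphOf ω).degree v) ≤ (n : ℝ) ^ (-(ε / (4 * ((q : ℝ) + 1))))}
    with hA
  -- p n → 0
  have hp0 : Tendsto (fun n : ℕ => p n) atTop (nhds 0) := by
    have h0 : Tendsto (fun y : ℝ => Real.log y / y) atTop (nhds 0) := by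
      simpa using Real.tendsto_pow_log_div_mul_add_atTop 1 0 1 one_ne_zero
    have h1 := (h0.comp tendsto_natCast_atTop_atTop).const_mul ((q:ℝ) + 1 + ε)
    simp only [mul_zero] at h1
    refine Tendsto.congr (fun n => ?_) h1
    rw [hp n]; simp [Function.comp]; ring
  have hple : ∀ᶠ n : ℕ in atTop, p n ≤ 1 := hp0.eventually_le_const (by norm_num)
  have hN : ∀ᶠ n : ℕ in atTop, 4 * (1 + c) / c ≤ (n : ℝ) :=
    tendsto_natCast_atTop_atTop.eventually_ge_atTop _
  -- the key eventual bound on the complement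
  have key : ∀ᶠ n : ℕ in atTop,
      gnp n (p n) ((A n)ᶜ) ≤ ENNReal.ofReal ((n : ℝ) ^ (-(c/2))) := by
    filter_upwards [eventually_ge_atTop 2, hple, hN] with n hn2 hr1 hn4
    have hnpos : (0:ℝ) < (n : ℝ) := by
      have : (0:ℕ) < n := by omega
      exact_mod_cast this
    set L : ℝ := Real.log n with hL
    have hL0 : 0 ≤ L := Real.log_nonneg (by exact_mod_cast Nat.one_le_iff_ne_zero.2 (by omega))
    have hr0 : 0 ≤ p n := by
      rw [hp n]
      have : 0 ≤ Real.log n := hL0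
      positivity
    set r : ℝ := p n with hrdef
    set S : (Sym2 (Fin n) → Bool) → ℝ := fun ω => ∑ v : Fin n, x ^ ((graphOf ω).degree v)
      with hS
    have hS0 : ∀ ω, 0 ≤ S ω := fun ω => Finset.sum_nonneg fun v _ => pow_nonneg hx0 _
    set t : ℝ := (n : ℝ) ^ (-(ε / (4 * ((q : ℝ) + 1)))) with ht
    have htpos : 0 < t := Real.rpow_pos_of_pos hnpos _
    have htc : t = (n : ℝ) ^ (-(c/4)) := by
      rw [ht, hc]
      congr 1
      rw [div_div]
      ring
    -- the expectation
    have hE : ∫ ω, S ω ∂gnp n r = (n : ℝ) * (1 - r * (1 - x)) ^ (n - 1) :=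
      integral_sum_pow_degree n r hr0 hr1 x
    set a : ℝ := r * (1 - x) with ha
    have ha0 : 0 ≤ a := mul_nonneg hr0 (by linarith)
    have ha1 : a ≤ 1 := by
      have h1x : 1 - x ≤ 1 := by linarith
      calc a ≤ 1 * 1 := mul_le_mul hr1 h1x (by linarith) (by norm_num)
        _ = 1 := by norm_num
    have h1a : 0 ≤ 1 - a := by linarith
    have ha_eq : a = (1 + c) * L / n := by
      have h1x : 1 - x = 1 / ((q : ℝ) + 1) := by
        rw [hxdef]; field_simp; ring
      have h1c : 1 + c = ((q : ℝ) + 1 + ε) / ((q : ℝ) + 1) := by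
        rw [hc]; field_simp
      rw [ha, hrdef, hp n, h1x, h1c, ← hL]
      field_simp
    have hcast : ((n - 1 : ℕ) : ℝ) = (n : ℝ) - 1 := by
      rw [Nat.cast_sub (by omega)]; simp
    -- analytic estimate : E / t ≤ n ^ (-(c/2))
    have step1 : (1 - a) ^ (n - 1) ≤ Real.exp (((n - 1 : ℕ) : ℝ) * (-a)) := by
      have hb : 1 - a ≤ Real.exp (-a) := by
        have := Real.add_one_le_exp (-a); linarith
      calc (1 - a) ^ (n - 1) ≤ (Real.exp (-a)) ^ (n - 1) := pow_le_pow_left₀ h1a hb _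
        _ = Real.exp (((n - 1 : ℕ) : ℝ) * (-a)) := (Real.exp_nat_mul _ _).symm
    have hexp_ineq : L + ((n - 1 : ℕ) : ℝ) * (-a) + L * (c/4) ≤ L * (-(c/2)) := by
      rw [ha_eq, hcast]
      have h4 : 4 * (1 + c) ≤ (n : ℝ) * c := (div_le_iff₀ hcpos).1 hn4
      have hfrac : (1 + c) * L - c/4 * L ≤ (1 + c) * L / (n : ℝ) * ((n : ℝ) - 1) := by
        rw [div_mul_eq_mul_div ((1 + c) * L) ((n : ℝ)) ((n : ℝ) - 1), le_div_iff₀ hnpos]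
        nlinarith [mul_nonneg hL0 (by linarith : (0:ℝ) ≤ (n : ℝ) * c - 4 * (1 + c))]
      nlinarith [hfrac]
    have hEt : (n : ℝ) * (1 - a) ^ (n - 1) / t ≤ (n : ℝ) ^ (-(c/2)) := by
      have e1 : (n : ℝ) ^ (c/4) = Real.exp (L * (c/4)) := by
        rw [Real.rpow_def_of_pos hnpos]
      have e2 : (n : ℝ) = Real.exp L := (Real.exp_log hnpos).symm
      calc (n : ℝ) * (1 - a) ^ (n - 1) / t
          = (n : ℝ) * (1 - a) ^ (n - 1) * (n : ℝ) ^ (c/4) := by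
            rw [htc, Real.rpow_neg hnpos.le, div_eq_mul_inv, inv_inv]
        _ ≤ Real.exp L * Real.exp (((n - 1 : ℕ) : ℝ) * (-a)) * Real.exp (L * (c/4)) := by
            refine mul_le_mul (mul_le_mul (le_of_eq e2) step1 (pow_nonneg h1a _)
              (Real.exp_pos L).le) (le_of_eq e1) (Real.rpow_nonneg hnpos.le _) (by positivity)
        _ = Real.exp (L + ((n - 1 : ℕ) : ℝ) * (-a) + L * (c/4)) := by
            rw [← Real.exp_add, ← Real.exp_add]
        _ ≤ Real.exp (L * (-(c/2))) := Real.exp_le_exp.2 hexp_ineq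
        _ = (n : ℝ) ^ (-(c/2)) := by rw [Real.rpow_def_of_pos hnpos]
    -- Markov's inequality
    have hmarkov := mul_meas_ge_le_integral_of_nonneg (μ := gnp n r) (f := S)
      (Filter.Eventually.of_forall hS0) Integrable.of_finite t
    rw [hE] at hmarkov
    have hmeas_le : (gnp n r {ω | t ≤ S ω}).toReal ≤ (n : ℝ) ^ (-(c/2)) := by
      have h1 : (gnp n r {ω | t ≤ S ω}).toReal ≤ (n : ℝ) * (1 - a) ^ (n - 1) / t := by
        rw [le_div_iff₀ htpos]
        calc (gnp n r {ω | t ≤ S ω}).toReal * t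
            = t * (gnp n r {ω | t ≤ S ω}).toReal := mul_comm _ _
          _ ≤ (n : ℝ) * (1 - r * (1 - x)) ^ (n - 1) := hmarkov
          _ = (n : ℝ) * (1 - a) ^ (n - 1) := by rw [← ha]
      exact h1.trans hEt
    have hsub : (A n)ᶜ ⊆ {ω | t ≤ S ω} := by
      intro ω hω
      have hω' : ¬ (S ω ≤ t) := hω
      exact (not_le.1 hω').le
    calc gnp n (p n) ((A n)ᶜ) ≤ gnp n r {ω | t ≤ S ω} := measure_mono hsub
      _ = ENNReal.ofReal ((gnp n r {ω | t ≤ S ω}).toReal) :=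
          (ENNReal.ofReal_toReal (measure_ne_top _ _)).symm
      _ ≤ ENNReal.ofReal ((n : ℝ) ^ (-(c/2))) := ENNReal.ofReal_le_ofReal hmeas_le
  -- conclude
  have hlim0 : Tendsto (fun n : ℕ => ENNReal.ofReal ((n : ℝ) ^ (-(c/2)))) atTop (nhds 0) := by
    rw [← ENNReal.ofReal_zero]
    exact (ENNReal.continuous_ofReal.tendsto 0).comp
      ((tendsto_rpow_neg_atTop (by positivity)).comp tendsto_natCast_atTop_atTop)
  have hcompl : Tendsto (fun n : ℕ => gnp n (p n) ((A n)ᶜ)) atTop (nhds 0) :=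
    tendsto_of_tendsto_of_tendsto_of_le_of_le' tendsto_const_nhds hlim0
      (Filter.Eventually.of_forall fun n => zero_le) key
  have hsublim : Tendsto (fun n : ℕ => 1 - gnp n (p n) ((A n)ᶜ)) atTop (nhds (1 - 0)) :=
    ENNReal.Tendsto.sub tendsto_const_nhds hcompl (Or.inl ENNReal.one_ne_top)
  have heq : ∀ n : ℕ, 1 - gnp n (p n) ((A n)ᶜ) = gnp n (p n) (A n) := by
    intro n
    rw [prob_compl_eq_one_sub (MeasurableSet.of_discrete),
      ENNReal.sub_sub_cancel ENNReal.one_ne_top prob_le_one]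
  simpa using hsublim.congr heq
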